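/- GAP SAFE ball (Theorem 2): for any β ∈ ℝᵖ and θ ∈ Δ_X, letting r = (1/λ)·√((‖y‖² − ‖Xβ − y‖² − 2λ‖β‖₁)₊) and R = ‖θ − y/λ‖, the dual optimal solution θ̂ satisfies ‖θ̂ − θ‖ ≤ √(R² − r²). -/

import Mathlib

open scoped BigOperators RealInnerProductSpace

def toE {n : ℕ} (v : Fin n → ℝ) : EuclideanSpace ℝ (Fin n) := WithLp.toLp 2 v

set_option maxHeartbeats 1000000 in
/-- Theorem 2, GAP SAFE ball: for any `β ∈ ℝᵖ` and dual feasible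
`θ`, with `r = (1/λ)√((‖y‖² − ‖Xβ − y‖² − 2λ‖β‖₁)₊)` and `R = ‖θ − y/λ‖`,
the dual optimal solution `θ̂ = Π_{Δ_X}(y/λ)` satisfies `‖θ̂ − θ‖ ≤ √(R² − r²)`. -/
theorem lasso_gap_safe_ball {n p : ℕ}
    (X : Matrix (Fin n) (Fin p) ℝ) (y : EuclideanSpace ℝ (Fin n))
    (lam : ℝ) (hlam : 0 < lam)
    (Δ : Set (EuclideanSpace ℝ (Fin n)))
    (hΔ : Δ = {θ | ∀ j, |∑ i, X i j * θ i| ≤ 1})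
    (θh : EuclideanSpace ℝ (Fin n))
    (hfeas : θh ∈ Δ)
    (hproj : ∀ θ' ∈ Δ, ‖θh - (1/lam) • y‖ ≤ ‖θ' - (1/lam) • y‖)
    (β : Fin p → ℝ) (θ : EuclideanSpace ℝ (Fin n)) (hθ : θ ∈ Δ)
    (r R : ℝ)
    (hr : r = (1/lam) * Real.sqrt
      (max (‖y‖^2 - ‖toE (X.mulVec β) - y‖^2 - 2 * lam * ∑ j, |β j|) 0))
    (hR : R = ‖θ - (1/lam) • y‖) :
    ‖θh - θ‖ ≤ Real.sqrt (R^2 - r^2) := by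
  set c : EuclideanSpace ℝ (Fin n) := (1/lam) • y with hc
  -- convexity of Δ
  have hconv : Convex ℝ Δ := by
    rw [hΔ]
    intro a ha b hb s t hs ht hst
    intro j
    have : ∑ i, X i j * (s • a + t • b) i = s * (∑ i, X i j * a i) + t * (∑ i, X i j * b i) := by
      simp only [PiLp.add_apply, PiLp.smul_apply, smul_eq_mul, Finset.mul_sum]
      rw [← Finset.sum_add_distrib]
      congr 1; ext i; ring
    rw [this]
    calc |s * (∑ i, X i j * a i) + t * (∑ i, X i j * b i)|
        ≤ s * |∑ i, X i j * a i| + t * |∑ i, X i j * b i| := by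
          refine (abs_add_le _ _).trans ?_
          rw [abs_mul, abs_mul, abs_of_nonneg hs, abs_of_nonneg ht]
      _ ≤ s * 1 + t * 1 := by gcongr; exacts [ha j, hb j]
      _ = 1 := by rw [mul_one, mul_one, hst]
  have hne : Nonempty Δ := ⟨⟨θh, hfeas⟩⟩
  -- variational inequality
  have hiInf : ‖c - θh‖ = ⨅ w : Δ, ‖c - w‖ := by
    apply le_antisymm
    · apply le_ciInf
      intro w
      rw [norm_sub_rev, norm_sub_rev c w]
      exact hproj w w.2
    · have hbdd : BddBelow (Set.range fun w : Δ => ‖c - (w : EuclideanSpace ℝ (Fin n))‖) :=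
        ⟨0, by rintro x ⟨w, rfl⟩; exact norm_nonneg _⟩
      exact ciInf_le hbdd ⟨θh, hfeas⟩
  have hvar : ⟪c - θh, θ - θh⟫ ≤ 0 :=
    ((norm_eq_iInf_iff_real_inner_le_zero hconv hfeas).mp hiInf) θ hθ
  -- step B
  have hB : ‖θh - θ‖^2 ≤ R^2 - ‖θh - c‖^2 := by
    have hexp : ‖θ - c‖^2 = ‖θ - θh‖^2 + 2 * ⟪θ - θh, θh - c⟫ + ‖θh - c‖^2 := by
      have := norm_add_sq_real (θ - θh) (θh - c)
      simpa [sub_add_sub_cancel] using this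
    have h1 : ⟪θ - θh, θh - c⟫ ≥ 0 := by
      have e : ⟪c - θh, θ - θh⟫ = -⟪θ - θh, θh - c⟫ := by
        rw [real_inner_comm, ← inner_neg_right]
        congr 1
        exact (neg_sub θh c).symm
      linarith [e ▸ hvar]
    rw [hR, norm_sub_rev θh θ]
    nlinarith [hexp]
  -- step C: r^2 ≤ ‖θh - c‖^2
  have hfeas' : ∀ j, |∑ i, X i j * θh i| ≤ 1 := by
    have h := hfeas; rw [hΔ] at h; exact h
  set v : EuclideanSpace ℝ (Fin n) := toE (X.mulVec β) with hv
  set S : ℝ := ∑ j, |β j| with hS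
  have hdual : ⟪v, θh⟫ ≤ S := by
    have hswap : ⟪v, θh⟫ = ∑ j, β j * (∑ i, X i j * θh i) := by
      rw [PiLp.inner_apply]
      simp only [hv, toE, Matrix.mulVec, dotProduct, RCLike.inner_apply, conj_trivial]
      simp_rw [Finset.mul_sum]
      rw [Finset.sum_comm]
      congr 1; ext j
      congr 1; ext i; ring
    rw [hswap, hS]
    calc ∑ j, β j * (∑ i, X i j * θh i) ≤ ∑ j, |β j * (∑ i, X i j * θh i)| :=
          Finset.sum_le_sum fun j _ => le_abs_self _
      _ ≤ ∑ j, |β j| := by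
          apply Finset.sum_le_sum
          intro j _
          rw [abs_mul]
          calc |β j| * |∑ i, X i j * θh i| ≤ |β j| * 1 := by gcongr; exact hfeas' j
            _ = |β j| := mul_one _
  have hlc : lam • (θh - c) = lam • θh - y := by
    rw [hc, smul_sub, smul_smul, mul_one_div, div_self hlam.ne', one_smul]
  have hnorm_eq : lam^2 * ‖θh - c‖^2 = ‖lam • θh - y‖^2 := by
    rw [← hlc, norm_smul, Real.norm_eq_abs, abs_of_pos hlam, mul_pow]
  have hG : ‖y‖^2 - ‖v - y‖^2 - 2 * lam * S ≤ lam^2 * ‖θh - c‖^2 := by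
    rw [hnorm_eq]
    have e1 : ‖v - y + lam • θh‖^2 = ‖v - y‖^2 + 2 * ⟪v - y, lam • θh⟫ + ‖lam • θh‖^2 :=
      norm_add_sq_real _ _
    have e2 : ‖lam • θh - y‖^2 = ‖lam • θh‖^2 - 2 * ⟪lam • θh, y⟫ + ‖y‖^2 :=
      norm_sub_sq_real _ _
    have e3 : ⟪v - y, lam • θh⟫ = lam * ⟪v, θh⟫ - lam * ⟪y, θh⟫ := by
      rw [inner_sub_left, real_inner_smul_right, real_inner_smul_right]
    have e4 : ⟪lam • θh, y⟫ = lam * ⟪y, θh⟫ := by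
      rw [real_inner_smul_left, real_inner_comm]
    nlinarith [sq_nonneg ‖v - y + lam • θh‖, hdual, hlam.le]
  have hr2 : r^2 ≤ ‖θh - c‖^2 := by
    rw [hr, mul_pow, Real.sq_sqrt (le_max_right _ 0),
      show (1/lam)^2 = (lam^2)⁻¹ by field_simp,
      inv_mul_le_iff₀ (by positivity)]
    exact max_le (by nlinarith [hG]) (by positivity)
  -- conclude
  have hfinal : ‖θh - θ‖^2 ≤ R^2 - r^2 := by linarith
  calc ‖θh - θ‖ = Real.sqrt (‖θh - θ‖^2) := (Real.sqrt_sq (norm_nonneg _)).symm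
    _ ≤ Real.sqrt (R^2 - r^2) := Real.sqrt_le_sqrt hfinal
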